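/- Let A_0 ⊆ A_1 ⊆ … ⊆ A_{n-1} ⊆ B be a chain of fields and let T_n = A_0 + A_1X + … + A_{n-1}X^{n-1} + X^nB[X]. Then T_n is atomic: every nonzero nonunit element of T_n is a finite product of irreducible elements of T_n. -/

import Mathlib

/-- The polynomial composite `T_n = A_0 + A_1·X + … + A_{n-1}·X^{n-1} + X^n·B[X]` attached to a
monotone chain `A : ℕ → Subring B`: the subring of `B[X]` of polynomials whose `i`-th
coefficient lies in `A i` for every `i < n`. -/
def compositeChain {B : Type*} [CommRing B] (n : ℕ) (A : ℕ → Subring B) (hA : Monotone A) :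
    Subring (Polynomial B) where
  carrier := {f : Polynomial B | ∀ i < n, f.coeff i ∈ A i}
  mul_mem' {f g} hf hg := by
    intro i hi
    rw [Polynomial.coeff_mul]
    refine sum_mem fun x hx => ?_
    replace hx : x.1 + x.2 = i := by
      first
        | exact Finset.mem_antidiagonal.mp hx
        | simpa using hx
    have h1 : x.1 ≤ i := by omega
    have h2 : x.2 ≤ i := by omega
    exact mul_mem (hA h1 (hf x.1 (lt_of_le_of_lt h1 hi)))
      (hA h2 (hg x.2 (lt_of_le_of_lt h2 hi)))
  one_mem' := by
    intro i hi
    rw [Polynomial.coeff_one]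
    split
    · exact one_mem _
    · exact zero_mem _
  add_mem' {f g} hf hg := by
    intro i hi
    rw [Polynomial.coeff_add]
    exact add_mem (hf i hi) (hg i hi)
  zero_mem' := by
    intro i hi
    rw [Polynomial.coeff_zero]
    exact zero_mem _
  neg_mem' {f} hf := by
    intro i hi
    rw [Polynomial.coeff_neg]
    exact neg_mem (hf i hi)

theorem mem_compositeChain {B : Type*} [CommRing B] (n : ℕ) (A : ℕ → Subring B)
    (hA : Monotone A) (f : Polynomial B) :
    f ∈ compositeChain n A hA ↔ ∀ i < n, f.coeff i ∈ A i := Iff.rfl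

/-- For a chain of fields `A_0 ⊆ … ⊆ A_{n-1} ⊆ B`,
`T_n = A_0 + A_1·X + … + A_{n-1}·X^{n-1} + X^n·B[X]` is atomic: every nonzero nonunit of
`T_n` is a finite product of irreducible elements of `T_n`. -/
theorem compositeChain_atomic {B : Type*} [Field B]
    (n : ℕ) (hn : 0 < n) (A : ℕ → Subfield B) (hA : Monotone A) :
    ∀ g : compositeChain n (fun i => (A i).toSubring) (fun _ _ h _ hx => hA h hx),
      g ≠ 0 → ¬IsUnit g →
        ∃ l : Multiset (compositeChain n (fun i => (A i).toSubring)
            (fun _ _ h _ hx => hA h hx)),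
          (∀ b ∈ l, Irreducible b) ∧ l.prod = g := by
  set T := compositeChain n (fun i => (A i).toSubring) (fun _ _ h _ hx => hA h hx) with hT
  have unit_of_deg0 : ∀ g : T, g ≠ 0 → (g : Polynomial B).natDegree = 0 → IsUnit g := by
    intro g hg hdeg
    obtain ⟨c, hc⟩ := Polynomial.natDegree_eq_zero.mp hdeg
    have hc0 : c ≠ 0 := by
      rintro rfl
      exact hg (Subtype.ext (by simp [← hc]))
    have hcA : c ∈ A 0 := by
      have := g.2 0 hn
      rwa [← hc, Polynomial.coeff_C_zero] at this
    have hinv : (Polynomial.C c⁻¹ : Polynomial B) ∈ T := by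
      intro i _
      rw [Polynomial.coeff_C]
      split
      · next h => exact h ▸ (A 0).inv_mem hcA
      · exact zero_mem _
    refine isUnit_iff_exists_inv.mpr ⟨⟨Polynomial.C c⁻¹, hinv⟩, Subtype.ext ?_⟩
    push_cast
    rw [← hc, ← Polynomial.C_mul, mul_inv_cancel₀ hc0, Polynomial.C_1]
  suffices H : ∀ d : ℕ, ∀ g : T, (g : Polynomial B).natDegree = d → g ≠ 0 → ¬IsUnit g →
      ∃ l : Multiset T, (∀ b ∈ l, Irreducible b) ∧ l.prod = g by
    exact fun g hg hu => H _ g rfl hg hu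
  intro d
  induction d using Nat.strong_induction_on with
  | _ d ih =>
    intro g hdeg hg hu
    by_cases hirr : Irreducible g
    · exact ⟨{g}, by simpa using hirr, by simp⟩
    · rw [irreducible_iff] at hirr
      push_neg at hirr
      obtain ⟨a, b, hab, ha, hb⟩ := hirr hu
      have ha0 : a ≠ 0 := by
        rintro rfl; rw [zero_mul] at hab; exact hg hab
      have hb0 : b ≠ 0 := by
        rintro rfl; rw [mul_zero] at hab; exact hg hab
      have hav : (a : Polynomial B) ≠ 0 := fun h => ha0 (Subtype.ext h)
      have hbv : (b : Polynomial B) ≠ 0 := fun h => hb0 (Subtype.ext h)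
      have hda : (a : Polynomial B).natDegree ≠ 0 := fun h => ha (unit_of_deg0 a ha0 h)
      have hdb : (b : Polynomial B).natDegree ≠ 0 := fun h => hb (unit_of_deg0 b hb0 h)
      have hval : (g : Polynomial B) = (a : Polynomial B) * (b : Polynomial B) := by
        rw [hab]; push_cast; ring
      have hsum : d = (a : Polynomial B).natDegree + (b : Polynomial B).natDegree := by
        rw [← hdeg, hval, Polynomial.natDegree_mul hav hbv]
      obtain ⟨la, hla, hlap⟩ := ih (a : Polynomial B).natDegree (by omega) a rfl ha0 ha
      obtain ⟨lb, hlb, hlbp⟩ := ih (b : Polynomial B).natDegree (by omega) b rfl hb0 hb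
      refine ⟨la + lb, ?_, ?_⟩
      · intro x hx
        rcases Multiset.mem_add.mp hx with h | h
        · exact hla x h
        · exact hlb x h
      · rw [Multiset.prod_add, hlap, hlbp, hab]
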